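/- For n = 5, the number f_5(k) of meaningful k-th order compositions of the differential operations on ℝ⁵ satisfies the recurrence f_5(k) = f_5(k−1) + 2 f_5(k−2) − f_5(k−3) for all k ≥ 4. -/

import Mathlib

def adjA (n : ℕ) : Matrix (Fin n) (Fin n) ℤ :=
  Matrix.of fun i j =>
    if (j : ℕ) = (i : ℕ) + 1 ∨ (i : ℕ) + (j : ℕ) + 2 = n + 1 then 1 else 0

def fCount (n k : ℕ) : ℕ :=
  (Finset.univ.filter fun s : Fin k → Fin n =>
    ∀ i j : Fin k, (j : ℕ) = (i : ℕ) + 1 → adjA n (s i) (s j) = 1).card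

def Good {m : ℕ} (s : Fin m → Fin 5) : Prop :=
  ∀ i j : Fin m, (j : ℕ) = (i : ℕ) + 1 → adjA 5 (s i) (s j) = 1

instance {m : ℕ} : DecidablePred (Good (m := m)) := fun _ => by
  unfold Good; infer_instance

def C : ℕ → Fin 5 → ℤ
  | 0, _ => 1
  | k+1, i => ∑ j, adjA 5 i j * C k j

lemma good_one (s : Fin 1 → Fin 5) : Good s := by
  intro i j h
  exact absurd h (by omega)

lemma good_cons_iff {k : ℕ} (s : Fin (k + 2) → Fin 5) :
    Good s ↔ adjA 5 (s 0) (s 1) = 1 ∧ Good (Fin.tail s) := by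
  constructor
  · intro h
    refine ⟨h 0 1 (by simp), fun a b hab => h a.succ b.succ ?_⟩
    simp only [Fin.val_succ]
    omega
  · rintro ⟨h1, h2⟩ a b hab
    induction a using Fin.cases with
    | zero =>
        have hb : b = 1 := Fin.ext (by simpa using hab)
        rw [hb]; exact h1
    | succ a' =>
        induction b using Fin.cases with
        | zero => simp at hab
        | succ b' =>
            have : (b' : ℕ) = (a' : ℕ) + 1 := by
              simp only [Fin.val_succ] at hab; omega
            exact h2 a' b' this

def cN (k : ℕ) (i : Fin 5) : ℕ :=
  (Finset.univ.filter fun s : Fin (k + 1) → Fin 5 => Good s ∧ s 0 = i).card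

lemma adj_vals (i j : Fin 5) : adjA 5 i j = 0 ∨ adjA 5 i j = 1 := by
  unfold adjA
  simp only [Matrix.of_apply]
  split <;> simp

lemma cN_zero (i : Fin 5) : cN 0 i = 1 := by
  rw [cN, Finset.card_eq_one]
  refine ⟨fun _ => i, ?_⟩
  ext s
  simp only [Finset.mem_filter, Finset.mem_univ, true_and, Finset.mem_singleton]
  constructor
  · rintro ⟨_, h⟩
    funext a
    have ha : a = 0 := Fin.ext (Nat.lt_one_iff.1 a.isLt)
    rw [ha, h]
  · rintro rfl
    exact ⟨good_one _, rfl⟩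

lemma cN_succ (k : ℕ) (i : Fin 5) :
    (cN (k + 1) i : ℤ) = ∑ j, adjA 5 i j * (cN k j : ℤ) := by
  have hbij : cN (k + 1) i =
      (Finset.univ.filter fun t : Fin (k + 1) → Fin 5 =>
        Good t ∧ adjA 5 i (t 0) = 1).card := by
    refine Finset.card_nbij' Fin.tail
      (fun t => Fin.cons i t) ?_ ?_ ?_ ?_
    · intro s hs
      simp only [Finset.mem_coe, Finset.mem_filter, Finset.mem_univ, true_and] at hs ⊢
      obtain ⟨hg, h0⟩ := hs
      rw [good_cons_iff] at hg
      refine ⟨hg.2, ?_⟩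
      have ht : Fin.tail s 0 = s 1 := rfl
      rw [ht, ← h0]
      exact hg.1
    · intro t ht
      simp only [Finset.mem_coe, Finset.mem_filter, Finset.mem_univ, true_and] at ht ⊢
      refine ⟨?_, Fin.cons_zero _ _⟩
      rw [good_cons_iff]
      refine ⟨?_, by rw [Fin.tail_cons]; exact ht.1⟩
      rw [Fin.cons_zero]
      have h1 : (Fin.cons i t : Fin (k+2) → Fin 5) 1 = t 0 := by
        rw [show (1 : Fin (k+2)) = Fin.succ 0 from rfl, Fin.cons_succ]
      rw [h1]
      exact ht.2
    · intro s hs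
      simp only [Finset.mem_coe, Finset.mem_filter, Finset.mem_univ, true_and] at hs
      rw [← hs.2]
      exact Fin.cons_self_tail s
    · intro t _
      exact Fin.tail_cons (α := fun _ => Fin 5) i t
  rw [hbij]
  rw [Finset.card_eq_sum_card_fiberwise
    (f := fun t : Fin (k + 1) → Fin 5 => t 0) (t := Finset.univ) (fun _ _ => Finset.mem_univ _)]
  push_cast
  refine Finset.sum_congr rfl fun j _ => ?_
  rw [Finset.filter_filter]
  rcases adj_vals i j with h | h
  · rw [h, zero_mul]
    have he : (Finset.univ.filter fun t : Fin (k + 1) → Fin 5 =>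
        (Good t ∧ adjA 5 i (t 0) = 1) ∧ t 0 = j) = ∅ := by
      rw [Finset.filter_eq_empty_iff]
      rintro t _ ⟨⟨_, ha⟩, h0⟩
      rw [h0, h] at ha
      exact absurd ha (by norm_num)
    rw [he]
    simp
  · rw [h, one_mul]
    have he : (Finset.univ.filter fun t : Fin (k + 1) → Fin 5 =>
        (Good t ∧ adjA 5 i (t 0) = 1) ∧ t 0 = j) =
        (Finset.univ.filter fun t : Fin (k + 1) → Fin 5 => Good t ∧ t 0 = j) := by
      apply Finset.filter_congr
      intro t _
      constructor
      · rintro ⟨⟨hg, _⟩, h0⟩; exact ⟨hg, h0⟩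
      · rintro ⟨hg, h0⟩; exact ⟨⟨hg, h0 ▸ h⟩, h0⟩
    rw [he, cN]

lemma cN_eq_C : ∀ (k : ℕ) (i : Fin 5), (cN k i : ℤ) = C k i := by
  intro k
  induction k with
  | zero => intro i; rw [cN_zero]; rfl
  | succ k ih =>
      intro i
      rw [cN_succ, C]
      exact Finset.sum_congr rfl fun j _ => by rw [ih j]

lemma fCount_eq (k : ℕ) : (fCount 5 (k + 1) : ℤ) = ∑ i, C k i := by
  have h0 : fCount 5 (k + 1) =
      (Finset.univ.filter (fun s : Fin (k + 1) → Fin 5 => Good s)).card := by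
    rw [fCount]
    exact congrArg Finset.card (Finset.filter_congr fun s _ => Iff.rfl)
  have h1 : fCount 5 (k + 1) = ∑ i, cN k i := by
    rw [h0]
    rw [Finset.card_eq_sum_card_fiberwise
      (f := fun s : Fin (k + 1) → Fin 5 => s 0) (t := Finset.univ) (fun _ _ => Finset.mem_univ _)]
    refine Finset.sum_congr rfl fun i _ => ?_
    rw [cN, Finset.filter_filter]
  rw [h1]
  push_cast
  exact Finset.sum_congr rfl fun i _ => cN_eq_C k i

lemma C_rec : ∀ (k : ℕ) (i : Fin 5),
    C (k + 3) i = C (k + 2) i + 2 * C (k + 1) i - C k i := by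
  intro k
  induction k with
  | zero => decide
  | succ k ih =>
      intro i
      show (∑ j, adjA 5 i j * C (k + 3) j) = _
      have h : ∀ j : Fin 5, adjA 5 i j * C (k + 3) j =
          adjA 5 i j * C (k + 2) j + 2 * (adjA 5 i j * C (k + 1) j)
            - adjA 5 i j * C k j := by
        intro j; rw [ih j]; ring
      rw [Finset.sum_congr rfl fun j _ => h j]
      rw [Finset.sum_sub_distrib, Finset.sum_add_distrib, ← Finset.mul_sum]
      rfl

theorem fCount_five_recurrence (k : ℕ) (hk : 4 ≤ k) :
    (fCount 5 k : ℤ) =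
      (fCount 5 (k - 1) : ℤ) + 2 * (fCount 5 (k - 2) : ℤ) - (fCount 5 (k - 3) : ℤ) := by
  obtain ⟨m, rfl⟩ : ∃ m, k = m + 4 := ⟨k - 4, by omega⟩
  have h1 : m + 4 - 1 = (m + 2) + 1 := by omega
  have h2 : m + 4 - 2 = (m + 1) + 1 := by omega
  have h3 : m + 4 - 3 = m + 1 := by omega
  rw [h1, h2, h3, show m + 4 = (m + 3) + 1 from rfl, show m + 1 = m + 1 from rfl]
  rw [fCount_eq, fCount_eq, fCount_eq, fCount_eq]
  rw [Finset.sum_congr rfl fun i _ => C_rec m i]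
  rw [Finset.sum_sub_distrib, Finset.sum_add_distrib, ← Finset.mul_sum]
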